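/- Let G be a countable discrete group admitting an inner amenability sequence, let K be a compact metrizable topological group, let α : G → K be a group homomorphism, and let V₁ ⊇ V₂ ⊇ ⋯ be a decreasing sequence of open neighborhoods of the identity of K. Then there exists an inner amenability sequence (ξ_n) for G such that for every n, ξ_n vanishes outside α⁻¹(V_n). (Group case of the theorem on inner amenability sequences supported near the identity of a compact group.) -/

import Mathlib

open Filter Topology

/-- An inner amenability sequence for a countable discrete group `G`: a sequence `ξ n` of
nonnegative summable functions on `G` of total mass `1` such that for every `g ∈ G` the
conjugated functions `(ξ n)^g : h ↦ ξ n (g * h * g⁻¹)` satisfy `‖(ξ n)^g - ξ n‖₁ → 0`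
and `ξ n g → 0`. -/
def InnerAmenabilitySeq {G : Type*} [Group G] (ξ : ℕ → G → ℝ) : Prop :=
  (∀ n g, 0 ≤ ξ n g) ∧
  (∀ n, HasSum (ξ n) 1) ∧
  (∀ g : G, Tendsto (fun n => ∑' h : G, |ξ n (g * h * g⁻¹) - ξ n h|) atTop (𝓝 0)) ∧
  (∀ g : G, Tendsto (fun n => ξ n g) atTop (𝓝 0))

set_option linter.unusedSectionVars false
set_option linter.unusedVariables false


section
variable {G : Type*} [Group G]

def conjE (g : G) : G ≃ G where
  toFun h := g * h * g⁻¹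
  invFun h := g⁻¹ * h * g
  left_inv h := by group
  right_inv h := by group

@[simp] lemma conjE_apply (g h : G) : conjE g h = g * h * g⁻¹ := rfl

def mulE : G × G ≃ G × G where
  toFun p := (p.1 * p.2, p.2)
  invFun p := (p.1 * p.2⁻¹, p.2)
  left_inv p := by simp
  right_inv p := by simp

@[simp] lemma mulE_apply (p : G × G) : (mulE p : G × G) = (p.1 * p.2, p.2) := rfl
@[simp] lemma mulE_symm_apply (p : G × G) : (mulE.symm p : G × G) = (p.1 * p.2⁻¹, p.2) := rfl

lemma tsum_prod_mul {u v : G → ℝ} (hu : Summable u) (hv : Summable v)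
    (hu0 : 0 ≤ u) (hv0 : 0 ≤ v) :
    ∑' p : G × G, u p.1 * v p.2 = (∑' x, u x) * (∑' x, v x) := by
  rw [Summable.tsum_prod' (hu.mul_of_nonneg hv hu0 hv0) (fun x => (hv.mul_left (u x)))]
  simp_rw [tsum_mul_left]
  rw [tsum_mul_right]

lemma hasSum_prod_mul {u v : G → ℝ} (hu : Summable u) (hv : Summable v)
    (hu0 : 0 ≤ u) (hv0 : 0 ≤ v) :
    HasSum (fun p : G × G => u p.1 * v p.2) ((∑' x, u x) * (∑' x, v x)) := by
  rw [← tsum_prod_mul hu hv hu0 hv0]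
  exact (hu.mul_of_nonneg hv hu0 hv0).hasSum

/-- convolution of `η a` with the "inverse" of `η b` -/
noncomputable def zeta (η : ℕ → G → ℝ) (a b : ℕ) (x : G) : ℝ := ∑' h, η a (x * h) * η b h

variable (η : ℕ → G → ℝ) (hpos : ∀ m g, 0 ≤ η m g) (hsum : ∀ m, HasSum (η m) 1)

section Basic
include hpos hsum

lemma eta_le_one (m : ℕ) (x : G) : η m x ≤ 1 :=
  le_hasSum (hsum m) x (fun j _ => hpos m j)

lemma eta_summable (m : ℕ) : Summable (η m) := (hsum m).summable

lemma eta_conj_summable (m : ℕ) (g : G) : Summable (fun h => η m (g * h * g⁻¹)) :=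
  (conjE g).summable_iff.mpr (eta_summable η hpos hsum m)

lemma eta_conj_tsum (m : ℕ) (g : G) : ∑' h, η m (g * h * g⁻¹) = 1 := by
  have h1 : ∑' h, η m (conjE g h) = ∑' h, η m h := (conjE g).tsum_eq (η m)
  simpa [(hsum m).tsum_eq] using h1

lemma eta_abs_sub_le_one (m : ℕ) (u v : G) : |η m u - η m v| ≤ 1 := by
  have h1 := hpos m u; have h2 := hpos m v
  have h3 := eta_le_one η hpos hsum m u; have h4 := eta_le_one η hpos hsum m v
  rw [abs_sub_le_iff]; constructor <;> linarith

lemma zeta_nonneg (a b : ℕ) (x : G) : 0 ≤ zeta η a b x :=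
  tsum_nonneg fun h => mul_nonneg (hpos a _) (hpos b _)

lemma zeta_term_summable (a b : ℕ) (x : G) : Summable (fun h => η a (x * h) * η b h) :=
  Summable.of_nonneg_of_le (fun h => mul_nonneg (hpos a _) (hpos b _))
    (fun h => mul_le_of_le_one_left (hpos b h) (eta_le_one η hpos hsum a _))
    (eta_summable η hpos hsum b)

lemma zeta_prod_summable (a b : ℕ) :
    Summable (fun p : G × G => η a (p.1 * p.2) * η b p.2) :=
  (mulE.summable_iff (f := fun q : G × G => η a q.1 * η b q.2)).mpr
    (Summable.mul_of_nonneg (eta_summable η hpos hsum a) (eta_summable η hpos hsum b)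
      (fun x => hpos a x) (fun x => hpos b x))

lemma zeta_hasSum (a b : ℕ) : HasSum (zeta η a b) 1 := by
  have hps : HasSum (fun q : G × G => η a q.1 * η b q.2) 1 := by
    have := hasSum_prod_mul (eta_summable η hpos hsum a) (eta_summable η hpos hsum b)
      (fun x => hpos a x) (fun x => hpos b x)
    simpa [(hsum a).tsum_eq, (hsum b).tsum_eq] using this
  have hps2 : HasSum (fun p : G × G => η a (p.1 * p.2) * η b p.2) 1 :=
    (mulE.hasSum_iff (f := fun q : G × G => η a q.1 * η b q.2)).mpr hps
  exact hps2.prod_fiberwise (fun x => (zeta_term_summable η hpos hsum a b x).hasSum)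

end Basic

lemma zeta_tendsto (hpos : ∀ m g, 0 ≤ η m g) (hsum : ∀ m, HasSum (η m) 1)
    (hpt : ∀ g : G, Tendsto (fun n => η n g) atTop (𝓝 0)) (b : ℕ) (x : G) :
    Tendsto (fun a => zeta η a b x) atTop (𝓝 0) := by
  have h0 : Tendsto (fun a => ∑' h, η a (x * h) * η b h) atTop (𝓝 (∑' _ : G, (0:ℝ))) := by
    apply tendsto_tsum_of_dominated_convergence (bound := η b) (eta_summable η hpos hsum b)
    · intro h
      simpa using (hpt (x * h)).mul_const (η b h)
    · refine Eventually.of_forall fun a h => ?_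
      rw [Real.norm_eq_abs, abs_of_nonneg (mul_nonneg (hpos a _) (hpos b _))]
      exact mul_le_of_le_one_left (hpos b h) (eta_le_one η hpos hsum a _)
  simpa [zeta] using h0

end
section
variable {G : Type*} [Group G] (η : ℕ → G → ℝ)
  (hpos : ∀ m g, 0 ≤ η m g) (hsum : ∀ m, HasSum (η m) 1)
include hpos hsum

lemma zeta_conj (a b : ℕ) (g x : G) :
    zeta η a b (g * x * g⁻¹) = ∑' h, η a (g * (x * h) * g⁻¹) * η b (g * h * g⁻¹) := by
  have h1 : ∑' h, η a (g * x * g⁻¹ * conjE g h) * η b (conjE g h)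
      = ∑' h, η a (g * x * g⁻¹ * h) * η b h :=
    (conjE g).tsum_eq (fun h => η a (g * x * g⁻¹ * h) * η b h)
  have h2 : ∀ h : G, g * x * g⁻¹ * conjE g h = g * (x * h) * g⁻¹ := by
    intro h; rw [conjE_apply]; group
  calc zeta η a b (g * x * g⁻¹) = ∑' h, η a (g * x * g⁻¹ * h) * η b h := rfl
    _ = ∑' h, η a (g * x * g⁻¹ * conjE g h) * η b (conjE g h) := h1.symm
    _ = ∑' h, η a (g * (x * h) * g⁻¹) * η b (g * h * g⁻¹) := by
        refine tsum_congr fun h => ?_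
        rw [h2 h, conjE_apply]

set_option maxHeartbeats 1000000 in
lemma zeta_conj_diff (a b : ℕ) (g : G) :
    ∑' x, |zeta η a b (g * x * g⁻¹) - zeta η a b x| ≤
      (∑' y, |η a (g * y * g⁻¹) - η a y|) + ∑' y, |η b (g * y * g⁻¹) - η b y| := by
  have sA := eta_summable η hpos hsum a
  have sB := eta_summable η hpos hsum b
  have sAc := eta_conj_summable η hpos hsum a g
  have sBc := eta_conj_summable η hpos hsum b g
  have sDa : Summable (fun y => |η a (g * y * g⁻¹) - η a y|) := (sAc.sub sA).abs
  have sDb : Summable (fun y => |η b (g * y * g⁻¹) - η b y|) := (sBc.sub sB).abs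
  -- product summability for the two bounding double sums
  have hcmp1 : ((fun q : G × G => |η a (g * q.1 * g⁻¹) - η a q.1| * η b (g * q.2 * g⁻¹))
      ∘ (mulE : G × G ≃ G × G)) = fun p : G × G =>
      |η a (g * (p.1 * p.2) * g⁻¹) - η a (p.1 * p.2)| * η b (g * p.2 * g⁻¹) :=
    funext fun p => by simp [Function.comp]
  have hcmp2 : ((fun q : G × G => η a q.1 * |η b (g * q.2 * g⁻¹) - η b q.2|)
      ∘ (mulE : G × G ≃ G × G)) = fun p : G × G =>
      η a (p.1 * p.2) * |η b (g * p.2 * g⁻¹) - η b p.2| :=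
    funext fun p => by simp [Function.comp]
  have sP1 : Summable (fun p : G × G =>
      |η a (g * (p.1 * p.2) * g⁻¹) - η a (p.1 * p.2)| * η b (g * p.2 * g⁻¹)) := by
    rw [← hcmp1]
    exact (mulE.summable_iff).mpr
      (Summable.mul_of_nonneg sDa sBc (fun y => abs_nonneg _) (fun y => hpos b _))
  have sP2 : Summable (fun p : G × G =>
      η a (p.1 * p.2) * |η b (g * p.2 * g⁻¹) - η b p.2|) := by
    rw [← hcmp2]
    exact (mulE.summable_iff).mpr
      (Summable.mul_of_nonneg sA sDb (fun y => hpos a _) (fun y => abs_nonneg _))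
  -- the two bounding sums, as functions of x, sum to Da resp. Db
  have hS1 : HasSum (fun x => ∑' h, |η a (g * (x * h) * g⁻¹) - η a (x * h)| * η b (g * h * g⁻¹))
      ((∑' y, |η a (g * y * g⁻¹) - η a y|) * (∑' h, η b (g * h * g⁻¹))) := by
    have hprod := (mulE.hasSum_iff).mpr
      (hasSum_prod_mul sDa sBc (fun y => abs_nonneg _) (fun y => hpos b _))
    rw [hcmp1] at hprod
    exact hprod.prod_fiberwise (fun x => (sP1.prod_factor x).hasSum)
  have hS2 : HasSum (fun x => ∑' h, η a (x * h) * |η b (g * h * g⁻¹) - η b h|)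
      ((∑' y, η a y) * (∑' y, |η b (g * y * g⁻¹) - η b y|)) := by
    have hprod := (mulE.hasSum_iff).mpr
      (hasSum_prod_mul sA sDb (fun y => hpos a _) (fun y => abs_nonneg _))
    rw [hcmp2] at hprod
    exact hprod.prod_fiberwise (fun x => (sP2.prod_factor x).hasSum)
  -- pointwise bound
  have pw : ∀ x : G, |zeta η a b (g * x * g⁻¹) - zeta η a b x| ≤
      (∑' h, |η a (g * (x * h) * g⁻¹) - η a (x * h)| * η b (g * h * g⁻¹))
      + ∑' h, η a (x * h) * |η b (g * h * g⁻¹) - η b h| := by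
    intro x
    have sfA' : Summable (fun h => η a (g * (x * h) * g⁻¹) * η b (g * h * g⁻¹)) :=
      Summable.of_nonneg_of_le (fun h => mul_nonneg (hpos a _) (hpos b _))
        (fun h => mul_le_of_le_one_left (hpos b _) (eta_le_one η hpos hsum a _)) sBc
    have sfAB := zeta_term_summable η hpos hsum a b x
    have st1 : Summable (fun h => |η a (g * (x * h) * g⁻¹) - η a (x * h)| * η b (g * h * g⁻¹)) :=
      sP1.prod_factor x
    have st2 : Summable (fun h => η a (x * h) * |η b (g * h * g⁻¹) - η b h|) :=
      sP2.prod_factor x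
    rw [zeta_conj η hpos hsum a b g x]
    have hsub : zeta η a b x = ∑' h, η a (x * h) * η b h := rfl
    rw [hsub, ← Summable.tsum_sub sfA' sfAB]
    have habs : |∑' h, (η a (g * (x * h) * g⁻¹) * η b (g * h * g⁻¹) - η a (x * h) * η b h)|
        ≤ ∑' h, |η a (g * (x * h) * g⁻¹) * η b (g * h * g⁻¹) - η a (x * h) * η b h| := by
      have := norm_tsum_le_tsum_norm (f := fun h =>
        η a (g * (x * h) * g⁻¹) * η b (g * h * g⁻¹) - η a (x * h) * η b h)
        (by simpa [Real.norm_eq_abs] using (sfA'.sub sfAB).abs)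
      simpa [Real.norm_eq_abs] using this
    refine habs.trans ?_
    have hptw : ∀ h : G, |η a (g * (x * h) * g⁻¹) * η b (g * h * g⁻¹) - η a (x * h) * η b h|
        ≤ |η a (g * (x * h) * g⁻¹) - η a (x * h)| * η b (g * h * g⁻¹)
          + η a (x * h) * |η b (g * h * g⁻¹) - η b h| := by
      intro h
      have hrw : η a (g * (x * h) * g⁻¹) * η b (g * h * g⁻¹) - η a (x * h) * η b h
          = (η a (g * (x * h) * g⁻¹) - η a (x * h)) * η b (g * h * g⁻¹)
            + η a (x * h) * (η b (g * h * g⁻¹) - η b h) := by ring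
      rw [hrw]
      refine (abs_add_le _ _).trans ?_
      rw [abs_mul, abs_mul, abs_of_nonneg (hpos b _), abs_of_nonneg (hpos a _)]
    calc ∑' h, |η a (g * (x * h) * g⁻¹) * η b (g * h * g⁻¹) - η a (x * h) * η b h|
        ≤ ∑' h, (|η a (g * (x * h) * g⁻¹) - η a (x * h)| * η b (g * h * g⁻¹)
          + η a (x * h) * |η b (g * h * g⁻¹) - η b h|) :=
          Summable.tsum_le_tsum hptw ((sfA'.sub sfAB).abs) (st1.add st2)
      _ = _ := Summable.tsum_add st1 st2
  -- sum the pointwise bound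
  have sL : Summable (fun x => |zeta η a b (g * x * g⁻¹) - zeta η a b x|) := by
    have hz : Summable (fun x => zeta η a b (g * x * g⁻¹)) :=
      (conjE g).summable_iff.mpr (zeta_hasSum η hpos hsum a b).summable
    exact (hz.sub (zeta_hasSum η hpos hsum a b).summable).abs
  have := Summable.tsum_le_tsum pw sL (hS1.summable.add hS2.summable)
  refine this.trans ?_
  rw [Summable.tsum_add hS1.summable hS2.summable, hS1.tsum_eq, hS2.tsum_eq,
    eta_conj_tsum η hpos hsum b g, (hsum a).tsum_eq, mul_one, one_mul]

end


lemma exists_conjInvariant_nhd {K : Type*} [Group K] [TopologicalSpace K]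
    [IsTopologicalGroup K] [CompactSpace K] {V : Set K} (hVo : IsOpen V) (hV1 : (1:K) ∈ V) :
    ∃ W : Set K, IsOpen W ∧ (1:K) ∈ W ∧ W ⊆ V ∧ ∀ k x, x ∈ W → k * x * k⁻¹ ∈ W := by
  have hT : IsOpen {p : K × K | p.1 * p.2 * p.1⁻¹ ∈ V} := by
    have hco : Continuous fun p : K × K => p.1 * p.2 * p.1⁻¹ := by continuity
    exact hVo.preimage hco
  have h1 : ∀ k : K, ∃ u v : Set K, IsOpen u ∧ IsOpen v ∧ k ∈ u ∧ (1:K) ∈ v ∧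
      ∀ a ∈ u, ∀ b ∈ v, a * b * a⁻¹ ∈ V := by
    intro k
    have hk : (k, (1:K)) ∈ {p : K × K | p.1 * p.2 * p.1⁻¹ ∈ V} := by simpa using hV1
    obtain ⟨u, v, hu, hv, hku, h1v, huv⟩ := isOpen_prod_iff.mp hT k 1 hk
    exact ⟨u, v, hu, hv, hku, h1v, fun a ha b hb => huv (Set.mk_mem_prod ha hb)⟩
  choose u v hu hv hku h1v huv using h1
  obtain ⟨t, ht⟩ := IsCompact.elim_finite_subcover isCompact_univ u hu
    (fun k _ => Set.mem_iUnion.mpr ⟨k, hku k⟩)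
  have hW0o : IsOpen (⋂ k ∈ t, v k) := isOpen_biInter_finset (fun k _ => hv k)
  have hW01 : (1:K) ∈ ⋂ k ∈ t, v k := Set.mem_biInter (fun k _ => h1v k)
  have hW0V : ∀ k x, x ∈ ⋂ k ∈ t, v k → k * x * k⁻¹ ∈ V := by
    intro k x hx
    obtain ⟨k0, hk0t, hk0⟩ := Set.mem_iUnion₂.mp (ht (Set.mem_univ k))
    exact huv k0 k hk0 x (Set.mem_iInter₂.mp hx k0 hk0t)
  refine ⟨⋃ k : K, (fun x => k⁻¹ * x * k) ⁻¹' (⋂ k ∈ t, v k), ?_, ?_, ?_, ?_⟩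
  · exact isOpen_iUnion fun k => hW0o.preimage (by continuity)
  · exact Set.mem_iUnion.mpr ⟨1, by simpa using hW01⟩
  · rintro x hx
    obtain ⟨k, hk⟩ := Set.mem_iUnion.mp hx
    have := hW0V k _ hk
    simpa [show k * (k⁻¹ * x * k) * k⁻¹ = x by group] using this
  · intro k x hx
    obtain ⟨k0, hk0⟩ := Set.mem_iUnion.mp hx
    refine Set.mem_iUnion.mpr ⟨k * k0, ?_⟩
    simp only [Set.mem_preimage] at hk0 ⊢
    rw [show (k * k0)⁻¹ * (k * x * k⁻¹) * (k * k0) = k0⁻¹ * x * k0 by group]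
    exact hk0

lemma exists_cover_smallDiff {K : Type*} [Group K] [TopologicalSpace K] [IsTopologicalGroup K]
    [CompactSpace K] {W : Set K} (hWo : IsOpen W) (hW1 : (1:K) ∈ W)
    (hWc : ∀ k x, x ∈ W → k * x * k⁻¹ ∈ W) :
    ∃ (t : Finset K) (P : K → Set K), t.Nonempty ∧ (∀ x : K, ∃ k ∈ t, x ∈ P k) ∧
      ∀ k, ∀ x ∈ P k, ∀ y ∈ P k, x * y⁻¹ ∈ W := by
  have hc : Continuous fun p : K × K => p.1 * p.2⁻¹ := by continuity
  have hT : IsOpen {p : K × K | p.1 * p.2⁻¹ ∈ W} := hWo.preimage hc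
  have h11 : ((1:K), (1:K)) ∈ {p : K × K | p.1 * p.2⁻¹ ∈ W} := by simpa using hW1
  obtain ⟨u1, u2, hu1, hu2, h1u1, h1u2, h12⟩ := isOpen_prod_iff.mp hT 1 1 h11
  obtain ⟨t, ht⟩ := IsCompact.elim_finite_subcover isCompact_univ
    (fun k : K => {x | k⁻¹ * x ∈ u1 ∩ u2})
    (fun k => ((hu1.inter hu2).preimage (continuous_const.mul continuous_id)))
    (fun x _ => Set.mem_iUnion.mpr ⟨x, by simp [h1u1, h1u2]⟩)
  have hcov : ∀ x : K, ∃ k ∈ t, x ∈ {x | k⁻¹ * x ∈ u1 ∩ u2} := by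
    intro x
    obtain ⟨k, hk, hxk⟩ := Set.mem_iUnion₂.mp (ht (Set.mem_univ x))
    exact ⟨k, hk, hxk⟩
  refine ⟨t, fun k => {x | k⁻¹ * x ∈ u1 ∩ u2}, ?_, hcov, ?_⟩
  · obtain ⟨k, hk, -⟩ := hcov 1
    exact ⟨k, hk⟩
  · intro k x hx y hy
    have h' : (k⁻¹ * x) * (k⁻¹ * y)⁻¹ ∈ W := h12 (Set.mk_mem_prod hx.1 hy.2)
    have := hWc k _ h'
    rw [show x * y⁻¹ = k * (k⁻¹ * x * (k⁻¹ * y)⁻¹) * k⁻¹ by group]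
    exact this

open Classical in
noncomputable def indf {G K : Type*} [Group G] [Group K] (α : G →* K) (A : Set K) (x : G) : ℝ :=
  if α x ∈ A then 1 else 0

section Indf
variable {G K : Type*} [Group G] [Group K] (α : G →* K)

lemma indf_nonneg (A : Set K) (x : G) : 0 ≤ indf α A x := by
  unfold indf; split <;> norm_num

lemma indf_le_one (A : Set K) (x : G) : indf α A x ≤ 1 := by
  unfold indf; split <;> norm_num

lemma indf_of_mem {A : Set K} {x : G} (h : α x ∈ A) : indf α A x = 1 := by
  unfold indf; rw [if_pos h]

lemma indf_of_not_mem {A : Set K} {x : G} (h : α x ∉ A) : indf α A x = 0 := by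
  unfold indf; rw [if_neg h]

end Indf

section Key
variable {G : Type*} [Group G] {K : Type*} [Group K] [TopologicalSpace K]
  [IsTopologicalGroup K] [CompactSpace K]

set_option maxHeartbeats 1600000 in
lemma key_exists (α : G →* K) (η : ℕ → G → ℝ) (hη : InnerAmenabilitySeq η)
    {W : Set K} (hWc : ∀ k x, x ∈ W → k * x * k⁻¹ ∈ W)
    (t : Finset K) (P : K → Set K) (htne : t.Nonempty)
    (hPcov : ∀ x : K, ∃ k ∈ t, x ∈ P k)
    (hPdiff : ∀ k, ∀ x ∈ P k, ∀ y ∈ P k, x * y⁻¹ ∈ W)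
    (F : Finset G) {ε : ℝ} (hε : 0 < ε) :
    ∃ ξ : G → ℝ, (∀ g, 0 ≤ ξ g) ∧ HasSum ξ 1 ∧ (∀ g, α g ∉ W → ξ g = 0) ∧
      (∀ g ∈ F, ∑' x : G, |ξ (g * x * g⁻¹) - ξ x| ≤ ε) ∧ (∀ g ∈ F, ξ g ≤ ε) := by
  obtain ⟨hpos, hsum, hinv, hpt⟩ := hη
  have hsummable := eta_summable η hpos hsum
  have hNR : (0:ℝ) < (t.card : ℝ) := by
    exact_mod_cast Finset.card_pos.mpr htne
  have sInd : ∀ (A : Set K) (m : ℕ), Summable (fun x => indf α A x * η m x) := fun A m =>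
    Summable.of_nonneg_of_le (fun x => mul_nonneg (indf_nonneg α A x) (hpos m x))
      (fun x => mul_le_of_le_one_left (hpos m x) (indf_le_one α A x)) (hsummable m)
  -- pigeonhole: for every m some part of the cover carries mass at least 1/card
  have pig : ∀ m : ℕ, ∃ k ∈ t, 1 / (t.card : ℝ) ≤ ∑' x, indf α (P k) x * η m x := by
    intro m
    by_contra hcon
    push_neg at hcon
    have hlt : ∑ k ∈ t, ∑' x, indf α (P k) x * η m x < ∑ _k ∈ t, 1 / (t.card : ℝ) :=
      Finset.sum_lt_sum_of_nonempty htne (fun k hk => hcon k hk)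
    have hconst : ∑ _k ∈ t, 1 / (t.card : ℝ) = 1 := by
      rw [Finset.sum_const, nsmul_eq_mul]
      field_simp
    have hsum1 : (1:ℝ) ≤ ∑ k ∈ t, ∑' x, indf α (P k) x * η m x := by
      have hcov : ∀ x : G, η m x ≤ ∑ k ∈ t, indf α (P k) x * η m x := by
        intro x
        obtain ⟨k, hk, hPk⟩ := hPcov (α x)
        calc η m x = indf α (P k) x * η m x := by rw [indf_of_mem α hPk, one_mul]
          _ ≤ ∑ k ∈ t, indf α (P k) x * η m x :=
            Finset.single_le_sum (fun i _ => mul_nonneg (indf_nonneg α (P i) x) (hpos m x)) hk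
      calc (1:ℝ) = ∑' x, η m x := ((hsum m).tsum_eq).symm
        _ ≤ ∑' x, ∑ k ∈ t, indf α (P k) x * η m x :=
            Summable.tsum_le_tsum hcov (hsummable m) (summable_sum (fun k _ => sInd (P k) m))
        _ = ∑ k ∈ t, ∑' x, indf α (P k) x * η m x := Summable.tsum_finsetSum (fun k _ => sInd (P k) m)
    rw [hconst] at hlt
    linarith
  have hch : ∀ m : ℕ, ∃ k : {k // k ∈ t}, 1 / (t.card : ℝ) ≤ ∑' x, indf α (P k.1) x * η m x := by
    intro m
    obtain ⟨k, hk, h⟩ := pig m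
    exact ⟨⟨k, hk⟩, h⟩
  choose φ hφ using hch
  obtain ⟨kst, hkst⟩ := Finite.exists_infinite_fiber φ
  have hSinf : Set.Infinite (φ ⁻¹' {kst} : Set ℕ) := Set.infinite_coe_iff.mp hkst
  have hQ : ∀ m : ℕ, m ∈ φ ⁻¹' {kst} → 1 / (t.card : ℝ) ≤ ∑' x, indf α (P kst.1) x * η m x := by
    intro m hm
    have h1 := hφ m
    have h2 : φ m = kst := hm
    rwa [h2] at h1
  -- choose the two indices
  set δ : ℝ := ε / (4 * (t.card : ℝ)^2) with hδdef
  have hδ : 0 < δ := by positivity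
  have hev1 : ∀ᶠ m in atTop, ∀ g ∈ F, (∑' x : G, |η m (g * x * g⁻¹) - η m x|) ≤ δ :=
    (eventually_all_finset F).mpr (fun g _ => (hinv g).eventually (eventually_le_nhds hδ))
  obtain ⟨M1, hM1⟩ := eventually_atTop.mp hev1
  obtain ⟨b, hbS, hbM⟩ := hSinf.exists_gt M1
  have hbinv := hM1 b hbM.le
  have hev2 : ∀ᶠ m in atTop, ∀ g ∈ F, zeta η m b g ≤ δ :=
    (eventually_all_finset F).mpr
      (fun g _ => (zeta_tendsto η hpos hsum hpt b g).eventually (eventually_le_nhds hδ))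
  obtain ⟨M2, hM2⟩ := eventually_atTop.mp hev2
  obtain ⟨a, haS, haM⟩ := hSinf.exists_gt (max M1 M2)
  have hainv := hM1 a ((le_max_left M1 M2).trans haM.le)
  have haζ := hM2 a ((le_max_right M1 M2).trans haM.le)
  -- the normalizing constant
  have sWζ : Summable (fun x => indf α W x * zeta η a b x) :=
    Summable.of_nonneg_of_le
      (fun x => mul_nonneg (indf_nonneg α W x) (zeta_nonneg η hpos hsum a b x))
      (fun x => mul_le_of_le_one_left (zeta_nonneg η hpos hsum a b x) (indf_le_one α W x))
      (zeta_hasSum η hpos hsum a b).summable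
  obtain ⟨c, hc⟩ : ∃ c : ℝ, c = ∑' x, indf α W x * zeta η a b x := ⟨_, rfl⟩
  have sfC : Summable (fun p : G × G => indf α W p.1 * (η a (p.1 * p.2) * η b p.2)) :=
    Summable.of_nonneg_of_le
      (fun p => mul_nonneg (indf_nonneg α W p.1) (mul_nonneg (hpos a _) (hpos b _)))
      (fun p => mul_le_of_le_one_left (mul_nonneg (hpos a _) (hpos b _)) (indf_le_one α W p.1))
      (zeta_prod_summable η hpos hsum a b)
  have hc1 : c = ∑' p : G × G, indf α W p.1 * (η a (p.1 * p.2) * η b p.2) := by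
    rw [hc]
    calc ∑' x, indf α W x * zeta η a b x
        = ∑' x, ∑' h, indf α W x * (η a (x * h) * η b h) := by
          refine tsum_congr fun x => ?_
          simp only [zeta, tsum_mul_left]
      _ = ∑' p : G × G, indf α W p.1 * (η a (p.1 * p.2) * η b p.2) :=
          (Summable.tsum_prod' sfC (fun x => sfC.prod_factor x)).symm
  have hc2 : c = ∑' p : G × G, indf α W (p.1 * p.2⁻¹) * (η a p.1 * η b p.2) := by
    have e1 : ∑' p : G × G, (fun p : G × G => indf α W p.1 * (η a (p.1 * p.2) * η b p.2))
          ((mulE.symm : G × G ≃ G × G) p)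
        = ∑' p : G × G, indf α W p.1 * (η a (p.1 * p.2) * η b p.2) :=
      (mulE.symm : G × G ≃ G × G).tsum_eq (fun p : G × G => indf α W p.1 * (η a (p.1 * p.2) * η b p.2))
    have e2 : ∀ p : G × G, (fun p : G × G => indf α W p.1 * (η a (p.1 * p.2) * η b p.2))
        ((mulE.symm : G × G ≃ G × G) p) = indf α W (p.1 * p.2⁻¹) * (η a p.1 * η b p.2) := by
      intro p; simp
    rw [hc1, ← e1]
    exact tsum_congr e2
  have sQQ : Summable (fun p : G × G =>
      (indf α (P kst.1) p.1 * η a p.1) * (indf α (P kst.1) p.2 * η b p.2)) :=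
    Summable.mul_of_nonneg (sInd (P kst.1) a) (sInd (P kst.1) b)
      (fun x => mul_nonneg (indf_nonneg α _ x) (hpos a x))
      (fun x => mul_nonneg (indf_nonneg α _ x) (hpos b x))
  have sRHS : Summable (fun p : G × G => indf α W (p.1 * p.2⁻¹) * (η a p.1 * η b p.2)) := by
    have h1 := ((mulE.symm : G × G ≃ G × G).summable_iff
      (f := fun p : G × G => indf α W p.1 * (η a (p.1 * p.2) * η b p.2))).mpr sfC
    exact h1.congr (fun p => by simp [Function.comp])
  have hlow : (∑' x, indf α (P kst.1) x * η a x) * (∑' x, indf α (P kst.1) x * η b x) ≤ c := by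
    rw [hc2, ← tsum_prod_mul (sInd (P kst.1) a) (sInd (P kst.1) b)
      (fun x => mul_nonneg (indf_nonneg α _ x) (hpos a x))
      (fun x => mul_nonneg (indf_nonneg α _ x) (hpos b x))]
    refine Summable.tsum_le_tsum ?_ sQQ sRHS
    intro p
    by_cases h1 : α p.1 ∈ P kst.1
    · by_cases h2 : α p.2 ∈ P kst.1
      · have hW' : α (p.1 * p.2⁻¹) ∈ W := by
          rw [map_mul, map_inv]
          exact hPdiff kst.1 _ h1 _ h2
        rw [indf_of_mem α h1, indf_of_mem α h2, indf_of_mem α hW']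
        refine le_of_eq (by ring)
      · rw [indf_of_not_mem α h2]
        have : (indf α (P kst.1) p.1 * η a p.1) * (0 * η b p.2) = 0 := by ring
        rw [this]
        exact mul_nonneg (indf_nonneg α W _) (mul_nonneg (hpos a _) (hpos b _))
    · rw [indf_of_not_mem α h1]
      have : (0 * η a p.1) * (indf α (P kst.1) p.2 * η b p.2) = 0 := by ring
      rw [this]
      exact mul_nonneg (indf_nonneg α W _) (mul_nonneg (hpos a _) (hpos b _))
  have hcge : 1 / (t.card : ℝ) * (1 / (t.card : ℝ)) ≤ c := by
    refine le_trans ?_ hlow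
    have hQa := hQ a haS
    have hQb := hQ b hbS
    have h0 : (0:ℝ) ≤ 1 / (t.card : ℝ) := by positivity
    exact mul_le_mul hQa hQb h0 (le_trans h0 hQa)
  have hcpos : 0 < c := lt_of_lt_of_le (by positivity) hcge
  have harith : ∀ x : ℝ, 0 ≤ x → x / c ≤ x * (t.card : ℝ)^2 := by
    intro x hx
    rw [div_le_iff₀ hcpos]
    have h1 : (1:ℝ) ≤ (t.card : ℝ)^2 * c := by
      have h2 := mul_le_mul_of_nonneg_left hcge
        (le_of_lt (show (0:ℝ) < (t.card : ℝ)^2 by positivity))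
      calc (1:ℝ) = (t.card : ℝ)^2 * (1 / (t.card : ℝ) * (1 / (t.card : ℝ))) := by
            field_simp
        _ ≤ (t.card : ℝ)^2 * c := h2
    calc x = x * 1 := (mul_one x).symm
      _ ≤ x * ((t.card : ℝ)^2 * c) := mul_le_mul_of_nonneg_left h1 hx
      _ = x * (t.card : ℝ)^2 * c := by ring
  -- the candidate
  refine ⟨fun x => indf α W x * zeta η a b x / c, ?_, ?_, ?_, ?_, ?_⟩
  · intro x
    exact div_nonneg (mul_nonneg (indf_nonneg α W x) (zeta_nonneg η hpos hsum a b x)) hcpos.le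
  · have h1 := sWζ.hasSum
    rw [← hc] at h1
    have h2 := h1.div_const c
    simpa [div_self hcpos.ne'] using h2
  · intro g hg
    simp [indf_of_not_mem α hg]
  · intro g hgF
    have hDa := hainv g hgF
    have hDb := hbinv g hgF
    have hzcd := zeta_conj_diff η hpos hsum a b g
    have hindc : ∀ x : G, indf α W (g * x * g⁻¹) = indf α W x := by
      intro x
      have hiff : α (g * x * g⁻¹) ∈ W ↔ α x ∈ W := by
        constructor
        · intro h
          have h3 := hWc ((α g)⁻¹) _ h
          rwa [show (α g)⁻¹ * α (g * x * g⁻¹) * ((α g)⁻¹)⁻¹ = α x by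
            rw [map_mul, map_mul, map_inv]; group] at h3
        · intro h
          have h3 := hWc (α g) _ h
          rwa [show α g * α x * (α g)⁻¹ = α (g * x * g⁻¹) by
            rw [map_mul, map_mul, map_inv]] at h3
      by_cases h : α x ∈ W
      · rw [indf_of_mem α (hiff.mpr h), indf_of_mem α h]
      · rw [indf_of_not_mem α (fun hx => h (hiff.mp hx)), indf_of_not_mem α h]
    have pw : ∀ x : G, |indf α W (g * x * g⁻¹) * zeta η a b (g * x * g⁻¹) / c
        - indf α W x * zeta η a b x / c|
        ≤ |zeta η a b (g * x * g⁻¹) - zeta η a b x| / c := by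
      intro x
      rw [hindc x, div_sub_div_same, ← mul_sub, abs_div, abs_mul,
        abs_of_nonneg (indf_nonneg α W x), abs_of_nonneg hcpos.le]
      exact (div_le_div_iff_of_pos_right hcpos).mpr
        (mul_le_of_le_one_left (abs_nonneg _) (indf_le_one α W x))
    have hξs : Summable (fun x => indf α W x * zeta η a b x / c) := sWζ.div_const c
    have hξcs : Summable (fun x => indf α W (g * x * g⁻¹) * zeta η a b (g * x * g⁻¹) / c) :=
      (((conjE g).summable_iff
        (f := fun x => indf α W x * zeta η a b x / c)).mpr hξs).congr
        (fun x => by simp [Function.comp])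
    have sL : Summable (fun x => |indf α W (g * x * g⁻¹) * zeta η a b (g * x * g⁻¹) / c
        - indf α W x * zeta η a b x / c|) := (hξcs.sub hξs).abs
    have hzc : Summable (fun x => zeta η a b (g * x * g⁻¹)) :=
      (((conjE g).summable_iff (f := zeta η a b)).mpr
        (zeta_hasSum η hpos hsum a b).summable).congr (fun x => by simp [Function.comp])
    have sR : Summable (fun x => |zeta η a b (g * x * g⁻¹) - zeta η a b x| / c) :=
      ((hzc.sub (zeta_hasSum η hpos hsum a b).summable).abs).div_const c
    calc ∑' x, |indf α W (g * x * g⁻¹) * zeta η a b (g * x * g⁻¹) / c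
        - indf α W x * zeta η a b x / c|
        ≤ ∑' x, |zeta η a b (g * x * g⁻¹) - zeta η a b x| / c := Summable.tsum_le_tsum pw sL sR
      _ = (∑' x, |zeta η a b (g * x * g⁻¹) - zeta η a b x|) / c := tsum_div_const
      _ ≤ ((∑' y, |η a (g * y * g⁻¹) - η a y|) + ∑' y, |η b (g * y * g⁻¹) - η b y|) / c :=
          (div_le_div_iff_of_pos_right hcpos).mpr hzcd
      _ ≤ ((∑' y, |η a (g * y * g⁻¹) - η a y|) + ∑' y, |η b (g * y * g⁻¹) - η b y|)
            * (t.card : ℝ)^2 :=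
          harith _ (add_nonneg (tsum_nonneg fun y => abs_nonneg _)
            (tsum_nonneg fun y => abs_nonneg _))
      _ ≤ (δ + δ) * (t.card : ℝ)^2 :=
          mul_le_mul_of_nonneg_right (add_le_add hDa hDb) (by positivity)
      _ ≤ ε := by
          have heq : (δ + δ) * (t.card : ℝ)^2 = ε / 2 := by
            rw [hδdef]; field_simp; ring
          linarith
  · intro g hgF
    have h1 : indf α W g * zeta η a b g / c ≤ zeta η a b g / c :=
      (div_le_div_iff_of_pos_right hcpos).mpr
        (mul_le_of_le_one_left (zeta_nonneg η hpos hsum a b g) (indf_le_one α W g))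
    have h2 : zeta η a b g / c ≤ zeta η a b g * (t.card : ℝ)^2 :=
      harith _ (zeta_nonneg η hpos hsum a b g)
    have h3 : zeta η a b g * (t.card : ℝ)^2 ≤ δ * (t.card : ℝ)^2 :=
      mul_le_mul_of_nonneg_right (haζ g hgF) (by positivity)
    have h4 : δ * (t.card : ℝ)^2 ≤ ε := by
      have heq : δ * (t.card : ℝ)^2 = ε / 4 := by
        rw [hδdef]; field_simp
      linarith
    linarith
end Key

/-- If a countable discrete group `G` admits an inner amenability sequence, `K` is a compact
metrizable topological group, `α : G → K` is a homomorphism and `V₁ ⊇ V₂ ⊇ ⋯` is a decreasing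
sequence of open neighborhoods of the identity of `K`, then there is an inner amenability
sequence `(ξ n)` for `G` such that `ξ n` vanishes outside `α⁻¹ (V n)` for every `n`. -/
theorem innerAmenabilitySeq_supported_near_one
    {G : Type*} [Group G] [Countable G]
    {K : Type*} [Group K] [TopologicalSpace K] [IsTopologicalGroup K]
    [CompactSpace K] [TopologicalSpace.MetrizableSpace K]
    (α : G →* K) (V : ℕ → Set K)
    (hVopen : ∀ n, IsOpen (V n)) (hVmem : ∀ n, (1 : K) ∈ V n)
    (hVanti : ∀ n, V (n + 1) ⊆ V n)
    (η : ℕ → G → ℝ) (hη : InnerAmenabilitySeq η) :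
    ∃ ξ : ℕ → G → ℝ, InnerAmenabilitySeq ξ ∧ ∀ n g, α g ∉ V n → ξ n g = 0 := by
  
  classical
  obtain ⟨e, he⟩ := exists_surjective_nat G
  have H : ∀ n : ℕ, ∃ ξ : G → ℝ, (∀ g, 0 ≤ ξ g) ∧ HasSum ξ 1 ∧
      (∀ g, α g ∉ V n → ξ g = 0) ∧
      (∀ g ∈ (Finset.range (n+1)).image e,
        ∑' x : G, |ξ (g * x * g⁻¹) - ξ x| ≤ 1 / ((n:ℝ) + 1)) ∧
      (∀ g ∈ (Finset.range (n+1)).image e, ξ g ≤ 1 / ((n:ℝ) + 1)) := by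
    intro n
    obtain ⟨W, hWo, hW1, hWV, hWc⟩ := exists_conjInvariant_nhd (hVopen n) (hVmem n)
    obtain ⟨t, P, htne, hPcov, hPdiff⟩ := exists_cover_smallDiff hWo hW1 hWc
    obtain ⟨ξ, h1, h2, h3, h4, h5⟩ := key_exists α η hη hWc t P htne hPcov hPdiff
      ((Finset.range (n+1)).image e) (show (0:ℝ) < 1 / ((n:ℝ) + 1) by positivity)
    exact ⟨ξ, h1, h2, fun g hg => h3 g (fun hw => hg (hWV hw)), h4, h5⟩
  choose ξ hξ1 hξ2 hξ3 hξ4 hξ5 using H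
  refine ⟨ξ, ⟨hξ1, hξ2, ?_, ?_⟩, fun n g hg => hξ3 n g hg⟩
  · intro g
    obtain ⟨j, hj⟩ := he g
    apply squeeze_zero' (Eventually.of_forall fun n => tsum_nonneg (fun x => abs_nonneg _))
      ?_ tendsto_one_div_add_atTop_nhds_zero_nat
    refine eventually_atTop.mpr ⟨j, fun n hn => ?_⟩
    exact hξ4 n g (Finset.mem_image.mpr ⟨j, Finset.mem_range.mpr (Nat.lt_succ_of_le hn), hj⟩)
  · intro g
    obtain ⟨j, hj⟩ := he g
    apply squeeze_zero' (Eventually.of_forall fun n => hξ1 n g)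
      ?_ tendsto_one_div_add_atTop_nhds_zero_nat
    refine eventually_atTop.mpr ⟨j, fun n hn => ?_⟩
    exact hξ5 n g (Finset.mem_image.mpr ⟨j, Finset.mem_range.mpr (Nat.lt_succ_of_le hn), hj⟩)
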